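/- arXiv:1910.08394 — 2 statements merged into one kernel-verified Lean document; each statement's English description precedes it below -/
import Mathlib

section
/- For every positive integer n and all y > 0, x > 1, the incomplete Bessel integral satisfies the bound |K_{in}(y, π)| ≤ (y/n²)·( sinh(π)·e^{−y} + ∫₀^π e^{−y cosh u}(cosh u + y sinh² u) du ). -/
open Real intervalIntegral

/-- The incomplete Bessel integral `K_{in}(y, ω) = ∫₀^ω e^{−y cosh u} cos(nu) du`. -/
noncomputable def besselKimInc (n : ℕ) (y ω : ℝ) : ℝ :=
  ∫ u in (0:ℝ)..ω, Real.exp (-y * Real.cosh u) * Real.cos (n * u)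

set_option maxHeartbeats 1000000 in
theorem besselKimInc_bound (n : ℕ) (hn : 0 < n) (y : ℝ) (hy : 0 < y) (x : ℝ) (hx : 1 < x) :
    |besselKimInc n y Real.pi| ≤
      (y / n ^ 2) * (Real.sinh Real.pi * Real.exp (-y)
        + ∫ u in (0:ℝ)..Real.pi,
            Real.exp (-y * Real.cosh u) * (Real.cosh u + y * Real.sinh u ^ 2)) := by
  have hn0 : (n : ℝ) ≠ 0 := Nat.cast_ne_zero.mpr hn.ne'
  set H : ℝ → ℝ := fun u =>
    Real.exp (-y * Real.cosh u) * Real.sin (n * u) / n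
      + (-y * Real.sinh u * Real.exp (-y * Real.cosh u)) * Real.cos (n * u) / n ^ 2 with hHdef
  set g : ℝ → ℝ := fun u =>
    (y * (y * Real.sinh u ^ 2 - Real.cosh u) * Real.exp (-y * Real.cosh u)) * Real.cos (n * u) / n ^ 2
    with hgdef
  have hH : ∀ u : ℝ, HasDerivAt H
      (Real.exp (-y * Real.cosh u) * Real.cos (n * u) + g u) u := by
    intro u
    have hc : HasDerivAt Real.cosh (Real.sinh u) u := Real.hasDerivAt_cosh u
    have hs : HasDerivAt Real.sinh (Real.cosh u) u := Real.hasDerivAt_sinh u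
    have hE : HasDerivAt (fun u => Real.exp (-y * Real.cosh u))
        (Real.exp (-y * Real.cosh u) * (-y * Real.sinh u)) u := by
      have := (hc.const_mul (-y)).exp
      simpa using this
    have hid : HasDerivAt (fun u : ℝ => (n : ℝ) * u) (n : ℝ) u := by
      simpa using (hasDerivAt_id u).const_mul (n : ℝ)
    have hsin : HasDerivAt (fun u => Real.sin (n * u)) (Real.cos (n * u) * n) u :=
      (Real.hasDerivAt_sin _).comp u hid
    have hcos : HasDerivAt (fun u => Real.cos (n * u)) (-Real.sin (n * u) * n) u :=
      (Real.hasDerivAt_cos _).comp u hid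
    have h1 : HasDerivAt (fun u => Real.exp (-y * Real.cosh u) * Real.sin (n * u) / n)
        ((Real.exp (-y * Real.cosh u) * (-y * Real.sinh u) * Real.sin (n * u)
          + Real.exp (-y * Real.cosh u) * (Real.cos (n * u) * n)) / n) u :=
      (hE.mul hsin).div_const _
    have hF' : HasDerivAt (fun u => -y * Real.sinh u * Real.exp (-y * Real.cosh u))
        (-y * Real.cosh u * Real.exp (-y * Real.cosh u)
          + -y * Real.sinh u * (Real.exp (-y * Real.cosh u) * (-y * Real.sinh u))) u := by
      have := ((hs.const_mul (-y)).mul hE)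
      refine this.congr_deriv ?_
      ring
    have h2 : HasDerivAt
        (fun u => (-y * Real.sinh u * Real.exp (-y * Real.cosh u)) * Real.cos (n * u) / n ^ 2)
        (((-y * Real.cosh u * Real.exp (-y * Real.cosh u)
          + -y * Real.sinh u * (Real.exp (-y * Real.cosh u) * (-y * Real.sinh u))) * Real.cos (n * u)
          + (-y * Real.sinh u * Real.exp (-y * Real.cosh u)) * (-Real.sin (n * u) * n)) / n ^ 2) u :=
      (hF'.mul hcos).div_const _
    have : HasDerivAt H _ u := h1.add h2
    convert this using 1
    simp only [hgdef]
    field_simp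
    ring
  have hEcont : Continuous fun u => Real.exp (-y * Real.cosh u) * Real.cos (n * u) := by
    continuity
  have hgcont : Continuous g := by
    simp only [hgdef]; continuity
  have key : (∫ u in (0:ℝ)..Real.pi,
      (Real.exp (-y * Real.cosh u) * Real.cos (n * u) + g u)) = H Real.pi - H 0 :=
    intervalIntegral.integral_eq_sub_of_hasDerivAt (fun u _ => hH u)
      ((hEcont.add hgcont).intervalIntegrable _ _)
  have hsplit : besselKimInc n y Real.pi
      = (H Real.pi - H 0) - ∫ u in (0:ℝ)..Real.pi, g u := by
    rw [← key, intervalIntegral.integral_add (hEcont.intervalIntegrable _ _)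
      (hgcont.intervalIntegrable _ _)]
    simp [besselKimInc]
  have hH0 : H 0 = 0 := by simp [hHdef]
  have hN : (0:ℝ) < (n:ℝ) ^ 2 := by positivity
  have hHpi : |H Real.pi - H 0| ≤ (y / n ^ 2) * (Real.sinh Real.pi * Real.exp (-y)) := by
    rw [hH0, sub_zero, hHdef]
    simp only [Real.sin_nat_mul_pi, mul_zero, zero_div, zero_add]
    have hsp : 0 < Real.sinh Real.pi := Real.sinh_pos_iff.mpr Real.pi_pos
    have hexp : Real.exp (-y * Real.cosh Real.pi) ≤ Real.exp (-y) := by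
      apply Real.exp_le_exp.mpr; nlinarith [Real.one_le_cosh Real.pi]
    have hA : -y * Real.sinh Real.pi * Real.exp (-y * Real.cosh Real.pi) ≤ 0 := by
      have := mul_pos (mul_pos hy hsp) (Real.exp_pos (-y * Real.cosh Real.pi))
      nlinarith
    calc |(-y * Real.sinh Real.pi * Real.exp (-y * Real.cosh Real.pi)) * Real.cos (n * Real.pi) / (n:ℝ) ^ 2|
        = y * Real.sinh Real.pi * Real.exp (-y * Real.cosh Real.pi) * |Real.cos (n * Real.pi)| / (n:ℝ) ^ 2 := by
          rw [abs_div, abs_mul, abs_of_nonpos hA, abs_of_pos hN]; ring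
      _ ≤ y * Real.sinh Real.pi * Real.exp (-y) * 1 / (n:ℝ) ^ 2 := by
          gcongr <;> first
            | exact hexp
            | exact Real.abs_cos_le_one _
      _ = (y / n ^ 2) * (Real.sinh Real.pi * Real.exp (-y)) := by ring
  have hbcont : Continuous fun u =>
      (y / (n:ℝ) ^ 2) * (Real.exp (-y * Real.cosh u) * (Real.cosh u + y * Real.sinh u ^ 2)) := by
    fun_prop
  have hgbound : |∫ u in (0:ℝ)..Real.pi, g u|
      ≤ (y / n ^ 2) * ∫ u in (0:ℝ)..Real.pi,
          Real.exp (-y * Real.cosh u) * (Real.cosh u + y * Real.sinh u ^ 2) := by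
    have hle : ∀ u : ℝ,
        |g u| ≤ (y / n ^ 2) * (Real.exp (-y * Real.cosh u) * (Real.cosh u + y * Real.sinh u ^ 2)) := by
      intro u
      have hE := Real.exp_pos (-y * Real.cosh u)
      have hch := Real.cosh_pos (x := u)
      have h5 : |y * Real.sinh u ^ 2 - Real.cosh u| ≤ Real.cosh u + y * Real.sinh u ^ 2 := by
        rw [abs_sub_le_iff]
        constructor <;> nlinarith [sq_nonneg (Real.sinh u)]
      simp only [hgdef]
      calc |y * (y * Real.sinh u ^ 2 - Real.cosh u) * Real.exp (-y * Real.cosh u) * Real.cos (n * u) / (n:ℝ) ^ 2|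
          = y * |y * Real.sinh u ^ 2 - Real.cosh u| * Real.exp (-y * Real.cosh u) * |Real.cos (n * u)| / (n:ℝ) ^ 2 := by
            rw [abs_div, abs_mul, abs_mul, abs_mul, abs_of_pos hy, abs_of_pos hE, abs_of_pos hN]
        _ ≤ y * (Real.cosh u + y * Real.sinh u ^ 2) * Real.exp (-y * Real.cosh u) * 1 / (n:ℝ) ^ 2 := by
            gcongr <;> first
              | exact h5
              | exact Real.abs_cos_le_one _
        _ = (y / n ^ 2) * (Real.exp (-y * Real.cosh u) * (Real.cosh u + y * Real.sinh u ^ 2)) := by ring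
    calc |∫ u in (0:ℝ)..Real.pi, g u|
        ≤ ∫ u in (0:ℝ)..Real.pi, |g u| := by
          simpa [Real.norm_eq_abs] using
            intervalIntegral.norm_integral_le_integral_norm (f := g) (a := (0:ℝ)) (b := Real.pi)
              Real.pi_pos.le
      _ ≤ ∫ u in (0:ℝ)..Real.pi,
            (y / n ^ 2) * (Real.exp (-y * Real.cosh u) * (Real.cosh u + y * Real.sinh u ^ 2)) := by
          apply intervalIntegral.integral_mono_on Real.pi_pos.le
            (hgcont.abs.intervalIntegrable _ _) (hbcont.intervalIntegrable _ _)
          intro u _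
          exact hle u
      _ = (y / n ^ 2) * ∫ u in (0:ℝ)..Real.pi,
            Real.exp (-y * Real.cosh u) * (Real.cosh u + y * Real.sinh u ^ 2) := by
          rw [← intervalIntegral.integral_const_mul]
  calc |besselKimInc n y Real.pi|
      ≤ |H Real.pi - H 0| + |∫ u in (0:ℝ)..Real.pi, g u| := by
        rw [hsplit]; exact abs_sub _ _
    _ ≤ (y / n ^ 2) * (Real.sinh Real.pi * Real.exp (-y))
        + (y / n ^ 2) * ∫ u in (0:ℝ)..Real.pi,
            Real.exp (-y * Real.cosh u) * (Real.cosh u + y * Real.sinh u ^ 2) :=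
          add_le_add hHpi hgbound
    _ = _ := by ring
end

section
/- Let μ ∈ ℂ with Re μ < 1/2 and n be a positive integer. Then for all x > 1, ∫₁^∞ (x²−1)^{−μ/2} e^{−yx} P^μ_{in−1/2}(x) dx = √(2/π) · y^{μ−1/2} · K_{in}(y) for every y > 0, where K_{in} is the modified Bessel function of purely imaginary index. -/
open Real Complex MeasureTheory
/-- The associated Legendre function of the first kind `P^μ_ν(x)`, `x > 1`, `Re μ < 1/2`,
via the Mehler integral representation (with `x = cosh α`, `α = log (x + √(x²−1))`). -/
noncomputable def legendreP (μ ν : ℂ) (x : ℝ) : ℂ :=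
  (Real.sqrt (2 / Real.pi) : ℂ) * ((Real.sqrt (x ^ 2 - 1) : ℝ) : ℂ) ^ μ /
      Complex.Gamma (1 / 2 - μ) *
    ∫ t in (0:ℝ)..Real.log (x + Real.sqrt (x ^ 2 - 1)),
      Complex.cosh ((t : ℂ) * (ν + 1 / 2)) / ((x - Real.cosh t : ℝ) : ℂ) ^ ((1:ℂ) / 2 + μ)

/-- The incomplete Legendre integral `P^μ_ν(z, ω)`, `z > 1`, `ω > 0`. -/
noncomputable def legendrePInc (μ ν : ℂ) (z ω : ℝ) : ℂ :=
  (Real.sqrt (2 / Real.pi) : ℂ) * Complex.Gamma (1 / 2 - μ) * ((z ^ 2 - 1 : ℝ) : ℂ) ^ (-μ / 2) /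
      (Complex.Gamma (1 + ν - μ) * Complex.Gamma (-ν - μ)) *
    ∫ t in (0:ℝ)..ω,
      Complex.cosh ((t : ℂ) * (ν + 1 / 2)) / ((Real.cosh t + z : ℝ) : ℂ) ^ ((1:ℂ) / 2 - μ)

/-- The modified Bessel function of the second kind of purely imaginary order `i n`. -/
noncomputable def besselKim (n : ℕ) (y : ℝ) : ℝ :=
  ∫ t in Set.Ioi (0:ℝ), Real.exp (-y * Real.cosh t) * Real.cos (n * t)



open Set

lemma preimage_addRight_Ioi (c : ℝ) : (fun x : ℝ => x + c) ⁻¹' Set.Ioi c = Set.Ioi 0 := by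
  ext x; simp

lemma measurable_cpow_const (w : ℂ) : Measurable fun z : ℂ => z ^ w := by
  have h : (fun z : ℂ => z ^ w)
      = fun z => if z = 0 then (if w = 0 then 1 else 0) else Complex.exp (Complex.log z * w) := by
    funext z; rw [Complex.cpow_def]
  rw [h]
  exact Measurable.ite (MeasurableSet.singleton 0) measurable_const
    ((Complex.measurable_log.mul_const w).cexp)

lemma integrableOn_cexp_cpow {y : ℝ} (hy : 0 < y) {s : ℂ} (hs : s.re < 1) :
    IntegrableOn (fun x : ℝ => Complex.exp (-(y:ℂ) * x) * (x:ℂ) ^ (-s)) (Set.Ioi 0) := by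
  have h1 : 0 < (1 - s).re := by simp [Complex.sub_re]; linarith
  have h0 := Complex.GammaIntegral_convergent h1
  have h2 : IntegrableOn
      (fun x : ℝ => (Real.exp (-(y*x)) : ℂ) * ((y*x : ℝ):ℂ) ^ ((1-s)-1)) (Set.Ioi 0) := by
    have := (integrableOn_Ioi_comp_mul_left_iff
      (fun x : ℝ => ((Real.exp (-x) : ℂ) * (x:ℂ) ^ ((1-s)-1))) 0 hy).mpr (by simpa using h0)
    simpa using this
  have h3 := h2.const_mul (((y:ℂ) ^ (-s))⁻¹)
  refine IntegrableOn.congr_fun h3 (fun x hx => ?_) measurableSet_Ioi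
  rw [Set.mem_Ioi] at hx
  have hyx : ((y*x : ℝ):ℂ) ^ ((1-s)-1) = (y:ℂ)^(-s) * (x:ℂ)^(-s) := by
    have : ((1:ℂ)-s)-1 = -s := by ring
    rw [this, Complex.ofReal_mul, Complex.mul_cpow_ofReal_nonneg hy.le hx.le]
  have hne : ((y:ℂ) ^ (-s)) ≠ 0 := by
    simp [Complex.cpow_eq_zero_iff, Complex.ofReal_ne_zero, hy.ne']
  rw [hyx]
  rw [Complex.ofReal_exp]
  push_cast
  field_simp

lemma integrableOn_cexp_cpow_shift {y : ℝ} (hy : 0 < y) {s : ℂ} (hs : s.re < 1) (c : ℝ) :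
    IntegrableOn (fun x : ℝ => Complex.exp (-(y:ℂ) * x) * ((x - c : ℝ):ℂ) ^ (-s)) (Set.Ioi c) := by
  rw [← (measurePreserving_add_right volume c).integrableOn_comp_preimage
    (measurableEmbedding_addRight c), preimage_addRight_Ioi]
  have h := (integrableOn_cexp_cpow hy hs).const_mul (Complex.exp (-(y:ℂ)*c))
  refine IntegrableOn.congr_fun h (fun x _ => ?_) measurableSet_Ioi
  simp only [Function.comp]
  rw [show ((x + c - c : ℝ):ℂ) = (x:ℂ) by push_cast; ring,
    show (-(y:ℂ) * (x + c : ℝ)) = -(y:ℂ)*c + -(y:ℂ)*x by push_cast; ring, Complex.exp_add]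
  ring

lemma integral_cexp_cpow_shift {y : ℝ} (hy : 0 < y) {s : ℂ} (hs : s.re < 1) (c : ℝ) :
    ∫ x in Set.Ioi c, Complex.exp (-(y:ℂ) * x) * ((x - c : ℝ):ℂ) ^ (-s)
      = Complex.exp (-(y:ℂ) * c) * ((1 / (y:ℂ)) ^ (1 - s) * Complex.Gamma (1 - s)) := by
  have h1 : 0 < (1 - s).re := by simp [Complex.sub_re]; linarith
  rw [← (measurePreserving_add_right volume c).setIntegral_preimage_emb
    (measurableEmbedding_addRight c) _ _, preimage_addRight_Ioi]
  have heq : ∀ x ∈ Set.Ioi (0:ℝ),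
      Complex.exp (-(y:ℂ) * (x + c : ℝ)) * ((x + c - c : ℝ):ℂ) ^ (-s)
        = Complex.exp (-(y:ℂ)*c) * ((x:ℂ) ^ ((1-s)-1) * Complex.exp (-((y:ℝ) * x : ℝ))) := by
    intro x _
    rw [show ((x + c - c : ℝ):ℂ) = (x:ℂ) by push_cast; ring,
      show (-(y:ℂ) * (x + c : ℝ)) = -(y:ℂ)*c + -((y:ℝ) * x : ℝ) by push_cast; ring,
      Complex.exp_add, show ((1:ℂ)-s)-1 = -s by ring]
    ring
  rw [MeasureTheory.setIntegral_congr_fun measurableSet_Ioi heq,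
    MeasureTheory.integral_const_mul]
  congr 1
  have := Complex.integral_cpow_mul_exp_neg_mul_Ioi h1 hy
  rw [← this]
  congr 1 with x
  norm_cast

lemma integral_rexp_rpow_shift {y : ℝ} (hy : 0 < y) {σ : ℝ} (hσ : σ < 1) (c : ℝ) :
    ∫ x in Set.Ioi c, Real.exp (-y * x) * (x - c) ^ (-σ)
      = Real.exp (-y * c) * ((1 / y) ^ (1 - σ) * Real.Gamma (1 - σ)) := by
  have h1 : 0 < 1 - σ := by linarith
  rw [← (measurePreserving_add_right volume c).setIntegral_preimage_emb
    (measurableEmbedding_addRight c) _ _, preimage_addRight_Ioi]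
  have heq : ∀ x ∈ Set.Ioi (0:ℝ),
      Real.exp (-y * (x + c)) * (x + c - c) ^ (-σ)
        = Real.exp (-y*c) * (x ^ ((1-σ)-1) * Real.exp (-(y * x))) := by
    intro x _
    rw [show x + c - c = x by ring, show -y * (x + c) = -y*c + -(y*x) by ring,
      Real.exp_add, show (1-σ)-1 = -σ by ring]
    ring
  rw [MeasureTheory.setIntegral_congr_fun measurableSet_Ioi heq,
    MeasureTheory.integral_const_mul, integral_rpow_mul_exp_neg_mul_Ioi h1 hy]


lemma measurable_cpow_const' (w : ℂ) : Measurable fun z : ℂ => z ^ w := by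
  have h : (fun z : ℂ => z ^ w)
      = fun z => if z = 0 then (if w = 0 then 1 else 0) else Complex.exp (Complex.log z * w) := by
    funext z; rw [Complex.cpow_def]
  rw [h]
  exact Measurable.ite (MeasurableSet.singleton 0) measurable_const
    ((Complex.measurable_log.mul_const w).cexp)

noncomputable def Fk (μ : ℂ) (n : ℕ) (y : ℝ) : ℝ → ℝ → ℂ := fun x t =>
  if 0 < t ∧ Real.cosh t < x then
    (Real.cos (n * t) : ℂ) *
      (Complex.exp (-(y:ℂ) * x) * ((x - Real.cosh t : ℝ):ℂ) ^ (-(1/2 + μ)))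
  else 0

lemma Fk_eq_indicator (μ : ℂ) (n : ℕ) (y : ℝ) :
    Function.uncurry (Fk μ n y) = Set.indicator {p : ℝ × ℝ | 0 < p.2 ∧ Real.cosh p.2 < p.1}
      (fun p => (Real.cos (n * p.2) : ℂ) *
        (Complex.exp (-(y:ℂ) * p.1) * ((p.1 - Real.cosh p.2 : ℝ):ℂ) ^ (-(1/2 + μ)))) := by
  funext p
  rw [Function.uncurry, Fk, Set.indicator_apply]
  rfl

lemma Fk_stronglyMeasurable (μ : ℂ) (n : ℕ) (y : ℝ) :
    StronglyMeasurable (Function.uncurry (Fk μ n y)) := by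
  rw [Fk_eq_indicator]
  have hS : MeasurableSet {p : ℝ × ℝ | 0 < p.2 ∧ Real.cosh p.2 < p.1} := by
    have : IsOpen {p : ℝ × ℝ | 0 < p.2 ∧ Real.cosh p.2 < p.1} :=
      (isOpen_lt continuous_const continuous_snd).inter
        (isOpen_lt (Real.continuous_cosh.comp continuous_snd) continuous_fst)
    exact this.measurableSet
  have hg : Measurable (fun p : ℝ × ℝ => (Real.cos (n * p.2) : ℂ) *
      (Complex.exp (-(y:ℂ) * p.1) * ((p.1 - Real.cosh p.2 : ℝ):ℂ) ^ (-(1/2 + μ)))) := by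
    refine Measurable.mul ?_ (Measurable.mul ?_ ?_)
    · exact Complex.measurable_ofReal.comp
        ((Real.continuous_cos.comp (continuous_const.mul continuous_snd)).measurable)
    · exact Complex.measurable_exp.comp
        ((Complex.measurable_ofReal.comp continuous_fst.measurable).const_mul (-(y:ℂ)))
    · exact (measurable_cpow_const' (-(1/2 + μ))).comp
        (Complex.measurable_ofReal.comp
          (continuous_fst.measurable.sub (Real.continuous_cosh.comp continuous_snd).measurable))
  exact (hg.stronglyMeasurable).indicator hS

lemma Fk_slice (μ : ℂ) (n : ℕ) (y : ℝ) {t : ℝ} (ht : 0 < t) :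
    (fun x => Fk μ n y x t) = Set.indicator (Set.Ioi (Real.cosh t))
      (fun x => (Real.cos (n * t) : ℂ) *
        (Complex.exp (-(y:ℂ) * x) * ((x - Real.cosh t : ℝ):ℂ) ^ (-(1/2 + μ)))) := by
  funext x
  rw [Fk, Set.indicator_apply]
  by_cases h : Real.cosh t < x
  · simp [ht, h]
  · simp [ht, h]

lemma Fk_slice_zero (μ : ℂ) (n : ℕ) (y : ℝ) {t : ℝ} (ht : ¬ 0 < t) :
    (fun x => Fk μ n y x t) = fun _ => 0 := by
  funext x; simp [Fk, ht]

lemma cosh_lower (t : ℝ) (ht : 0 ≤ t) : (1 + t) / 2 ≤ Real.cosh t := by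
  rw [Real.cosh_eq]
  have h1 : 1 + t ≤ Real.exp t := by linarith [Real.add_one_le_exp t]
  have h2 : 0 ≤ Real.exp (-t) := (Real.exp_pos _).le
  linarith

lemma integrableOn_exp_neg_cosh {y : ℝ} (hy : 0 < y) :
    IntegrableOn (fun t => Real.exp (-y * Real.cosh t)) (Set.Ioi 0) := by
  have hg : IntegrableOn (fun t => Real.exp (-(y/2)) * Real.exp (-(y/2) * t)) (Set.Ioi 0) :=
    (exp_neg_integrableOn_Ioi 0 (by positivity)).const_mul _
  refine Integrable.mono' hg ?_ ?_
  · exact ((Real.continuous_exp.comp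
      ((continuous_const.mul Real.continuous_cosh))).aestronglyMeasurable)
  · rw [ae_restrict_iff' measurableSet_Ioi]
    filter_upwards with t ht
    rw [Set.mem_Ioi] at ht
    rw [Real.norm_of_nonneg (Real.exp_pos _).le, ← Real.exp_add]
    apply Real.exp_le_exp.mpr
    have := cosh_lower t ht.le
    nlinarith

lemma norm_point {c x : ℝ} (hcx : c < x) (r : ℝ) (y : ℝ) (μ : ℂ) :
    ‖(r : ℂ) * (Complex.exp (-(y:ℂ) * x) * ((x - c : ℝ):ℂ) ^ (-(1/2 + μ)))‖
      = |r| * (Real.exp (-y * x) * (x - c) ^ (-(1/2 + μ.re))) := by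
  rw [norm_mul, norm_mul, Complex.norm_real, Real.norm_eq_abs]
  congr 1
  congr 1
  · rw [Complex.norm_exp]
    congr 1
    simp [Complex.mul_re]
  · rw [Complex.norm_cpow_eq_rpow_re_of_pos (by linarith)]
    congr 1
    simp [Complex.add_re, Complex.neg_re]

lemma Fk_slice' (μ : ℂ) (n : ℕ) (y : ℝ) {t : ℝ} (ht : 0 < t) (x : ℝ) :
    Fk μ n y x t = Set.indicator (Set.Ioi (Real.cosh t))
      (fun x => (Real.cos (n * t) : ℂ) *
        (Complex.exp (-(y:ℂ) * x) * ((x - Real.cosh t : ℝ):ℂ) ^ (-(1/2 + μ)))) x := by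
  rw [Fk, Set.indicator_apply]
  by_cases h : Real.cosh t < x
  · simp [ht, h]
  · simp [ht, h]

lemma Fk_slice_zero' (μ : ℂ) (n : ℕ) (y : ℝ) {t : ℝ} (ht : ¬ 0 < t) (x : ℝ) :
    Fk μ n y x t = 0 := by simp [Fk, ht]

lemma Fk_norm_integral {μ : ℂ} {n : ℕ} {y : ℝ} (hμ : μ.re < 1/2) (hy : 0 < y)
    {t : ℝ} (ht : 0 < t) :
    ∫ x, ‖Fk μ n y x t‖ = |Real.cos (n*t)| *
      (Real.exp (-y * Real.cosh t) *
        ((1/y) ^ (1 - (1/2 + μ.re)) * Real.Gamma (1 - (1/2 + μ.re)))) := by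
  have hσ : (1/2 + μ.re : ℝ) < 1 := by linarith
  simp only [Fk_slice' μ n y ht, norm_indicator_eq_indicator_norm]
  rw [MeasureTheory.integral_indicator measurableSet_Ioi]
  rw [MeasureTheory.setIntegral_congr_fun measurableSet_Ioi
    (fun x hx => norm_point (Set.mem_Ioi.mp hx) _ _ _)]
  rw [MeasureTheory.integral_const_mul, integral_rexp_rpow_shift hy hσ]

lemma Fk_integrable {μ : ℂ} {n : ℕ} {y : ℝ} (hμ : μ.re < 1/2) (hy : 0 < y) :
    Integrable (Function.uncurry (Fk μ n y)) ((volume : Measure ℝ).prod volume) := by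
  have hs : ((1:ℂ)/2 + μ).re < 1 := by
    rw [Complex.add_re]; norm_num; linarith
  have hσ : (1/2 + μ.re : ℝ) < 1 := by linarith
  set K := (1/y) ^ (1 - (1/2 + μ.re)) * Real.Gamma (1 - (1/2 + μ.re)) with hK
  have hKnn : 0 ≤ K := by
    apply mul_nonneg
    · positivity
    · exact (Real.Gamma_pos_of_pos (by linarith)).le
  rw [MeasureTheory.integrable_prod_iff' (Fk_stronglyMeasurable μ n y).aestronglyMeasurable]
  constructor
  · refine Filter.Eventually.of_forall (fun t => ?_)
    simp only [Function.uncurry_apply_pair]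
    by_cases ht : 0 < t
    · simp only [Fk_slice' μ n y ht]
      rw [integrable_indicator_iff measurableSet_Ioi]
      exact (integrableOn_cexp_cpow_shift hy hs (Real.cosh t)).const_mul _
    · simp only [Fk_slice_zero' μ n y ht]
      exact integrable_zero _ _ _
  · refine Integrable.mono'
      (g := Set.indicator (Set.Ioi 0) (fun t => Real.exp (-y * Real.cosh t) * K)) ?_ ?_ ?_
    · rw [integrable_indicator_iff measurableSet_Ioi]
      exact (integrableOn_exp_neg_cosh hy).mul_const K
    · exact ((Fk_stronglyMeasurable μ n y).norm.integral_prod_left').aestronglyMeasurable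
    · filter_upwards with t
      simp only [Function.uncurry_apply_pair]
      by_cases ht : 0 < t
      · rw [Fk_norm_integral hμ hy ht, Set.indicator_of_mem (Set.mem_Ioi.mpr ht),
          Real.norm_of_nonneg (by positivity), ← hK]
        have h1 : |Real.cos (n*t)| ≤ 1 := Real.abs_cos_le_one _
        have h2 : 0 ≤ Real.exp (-y * Real.cosh t) * K := by positivity
        calc |Real.cos (n*t)| * (Real.exp (-y * Real.cosh t) * K)
            ≤ 1 * (Real.exp (-y * Real.cosh t) * K) := mul_le_mul_of_nonneg_right h1 h2
          _ = _ := one_mul _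
      · simp only [Fk_slice_zero' μ n y ht]
        simp [Set.indicator_apply, ht]

lemma arcosh_pos {x : ℝ} (hx : 1 < x) : 0 < Real.log (x + Real.sqrt (x^2-1)) := by
  have ha : (0:ℝ) < x^2 - 1 := by nlinarith
  have hs : 0 < Real.sqrt (x^2-1) := Real.sqrt_pos.mpr ha
  exact Real.log_pos (by linarith)

lemma cosh_arcosh {x : ℝ} (hx : 1 < x) : Real.cosh (Real.log (x + Real.sqrt (x^2-1))) = x := by
  have ha : (0:ℝ) < x^2 - 1 := by nlinarith
  have hs : 0 < Real.sqrt (x^2-1) := Real.sqrt_pos.mpr ha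
  rw [Real.cosh_log (by linarith)]
  have hsq : Real.sqrt (x^2-1) ^ 2 = x^2 - 1 := Real.sq_sqrt ha.le
  have hmul : (x + Real.sqrt (x^2-1)) * (x - Real.sqrt (x^2-1)) = 1 := by nlinarith
  rw [inv_eq_of_mul_eq_one_right hmul]
  ring

lemma Fk_xslice' {μ : ℂ} {n : ℕ} {y : ℝ} {x : ℝ} (hx : 1 < x) (t : ℝ) :
    Fk μ n y x t = Set.indicator (Set.Ioo 0 (Real.log (x + Real.sqrt (x^2-1))))
      (fun t => (Real.cos (n * t) : ℂ) *
        (Complex.exp (-(y:ℂ) * x) * ((x - Real.cosh t : ℝ):ℂ) ^ (-(1/2 + μ)))) t := by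
  have hα := _root_.arcosh_pos hx
  have hcoshα := cosh_arcosh hx
  have hiff : (0 < t ∧ Real.cosh t < x)
      ↔ t ∈ Set.Ioo 0 (Real.log (x + Real.sqrt (x^2-1))) := by
    constructor
    · rintro ⟨ht, hcx⟩
      refine ⟨ht, ?_⟩
      have h2 : Real.cosh t < Real.cosh (Real.log (x + Real.sqrt (x^2-1))) := by
        rwa [hcoshα]
      have := Real.cosh_lt_cosh.mp h2
      rwa [abs_of_pos ht, abs_of_pos hα] at this
    · rintro ⟨ht, htα⟩
      refine ⟨ht, ?_⟩
      rw [← hcoshα]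
      exact Real.cosh_lt_cosh.mpr (by rwa [abs_of_pos ht, abs_of_pos hα])
  rw [Fk, Set.indicator_apply, if_congr hiff rfl rfl]

lemma Fk_zero_of_le {μ : ℂ} {n : ℕ} {y : ℝ} {x : ℝ} (hx : ¬ 1 < x) (t : ℝ) :
    Fk μ n y x t = 0 := by
  rw [Fk, if_neg]
  rintro ⟨ht, hcx⟩
  exact hx (lt_of_le_of_lt (Real.one_le_cosh t) hcx)

lemma Fk_integral_x {μ : ℂ} {n : ℕ} {y : ℝ} (hμ : μ.re < 1/2) (hy : 0 < y)
    {t : ℝ} (ht : 0 < t) :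
    ∫ x, Fk μ n y x t = (Real.cos (n*t) : ℂ) *
      ((Real.exp (-y * Real.cosh t) : ℝ) *
        ((1/(y:ℂ)) ^ ((1:ℂ)/2 - μ) * Complex.Gamma ((1:ℂ)/2 - μ))) := by
  have hs : ((1:ℂ)/2 + μ).re < 1 := by rw [Complex.add_re]; norm_num; linarith
  simp only [Fk_slice' μ n y ht]
  rw [MeasureTheory.integral_indicator measurableSet_Ioi,
    MeasureTheory.integral_const_mul, integral_cexp_cpow_shift hy hs]
  rw [show (1:ℂ) - (1/2 + μ) = (1:ℂ)/2 - μ by ring]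
  congr 2
  rw [Complex.ofReal_exp]
  push_cast
  ring_nf

theorem laplace_legendreP (μ : ℂ) (hμ : μ.re < 1 / 2) (n : ℕ) (hn : 0 < n)
    (y : ℝ) (hy : 0 < y) :
    ∫ x in Set.Ioi (1:ℝ),
        ((x ^ 2 - 1 : ℝ) : ℂ) ^ (-μ / 2) * Complex.exp (-(y : ℂ) * x) *
          legendreP μ (Complex.I * n - 1 / 2) x =
      (Real.sqrt (2 / Real.pi) : ℂ) * (y : ℂ) ^ (μ - 1 / 2) * (besselKim n y : ℂ) := by
  have hΓre : (0:ℝ) < ((1:ℂ)/2 - μ).re := by rw [Complex.sub_re]; norm_num; linarith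
  have hΓ : Complex.Gamma ((1:ℂ)/2 - μ) ≠ 0 := Complex.Gamma_ne_zero_of_re_pos hΓre
  have hpt : ∀ x ∈ Set.Ioi (1:ℝ),
      ((x ^ 2 - 1 : ℝ) : ℂ) ^ (-μ / 2) * Complex.exp (-(y : ℂ) * x) *
          legendreP μ (Complex.I * n - 1 / 2) x
        = ((Real.sqrt (2 / Real.pi) : ℂ) / Complex.Gamma ((1:ℂ)/2 - μ)) *
            ∫ t, Fk μ n y x t := by
    intro x hx
    rw [Set.mem_Ioi] at hx
    have hα := _root_.arcosh_pos hx
    have ha : (0:ℝ) < x^2 - 1 := by nlinarith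
    have hAB : ((x ^ 2 - 1 : ℝ) : ℂ) ^ (-μ / 2) * ((Real.sqrt (x ^ 2 - 1) : ℝ) : ℂ) ^ μ = 1 := by
      have h1 : ((x^2-1:ℝ):ℂ) ≠ 0 := by exact_mod_cast ha.ne'
      have h2 : ((Real.sqrt (x^2-1):ℝ):ℂ) ≠ 0 := by
        exact_mod_cast (Real.sqrt_pos.mpr ha).ne'
      rw [Complex.cpow_def_of_ne_zero h1, Complex.cpow_def_of_ne_zero h2, ← Complex.exp_add,
        ← Complex.ofReal_log ha.le, ← Complex.ofReal_log (Real.sqrt_nonneg _),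
        Real.log_sqrt ha.le]
      rw [show (↑(Real.log (x^2-1)) : ℂ) * (-μ/2) + ↑(Real.log (x^2-1)/2) * μ = 0 by
        push_cast; ring]
      exact Complex.exp_zero
    have hJ : (∫ t in (0:ℝ)..Real.log (x + Real.sqrt (x ^ 2 - 1)),
        Complex.cosh ((t : ℂ) * ((Complex.I * n - 1/2) + 1 / 2)) /
          ((x - Real.cosh t : ℝ) : ℂ) ^ ((1:ℂ) / 2 + μ))
        = ∫ t in Set.Ioo 0 (Real.log (x + Real.sqrt (x ^ 2 - 1))),
            (Real.cos (n * t) : ℂ) * ((x - Real.cosh t : ℝ):ℂ) ^ (-(1/2 + μ)) := by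
      rw [intervalIntegral.integral_of_le hα.le, MeasureTheory.integral_Ioc_eq_integral_Ioo]
      refine MeasureTheory.setIntegral_congr_fun measurableSet_Ioo (fun t _ => ?_)
      rw [show ((Complex.I * n - 1/2) + 1/2 : ℂ) = Complex.I * n by ring]
      rw [show ((t:ℂ) * (Complex.I * n)) = ((n:ℝ) * t : ℝ) * Complex.I by push_cast; ring]
      rw [Complex.cosh_mul_I, ← Complex.ofReal_cos]
      rw [Complex.cpow_neg, div_eq_mul_inv]
    have hint : ∫ t, Fk μ n y x t
        = Complex.exp (-(y:ℂ)*x) * ∫ t in Set.Ioo 0 (Real.log (x + Real.sqrt (x^2-1))),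
            (Real.cos (n * t) : ℂ) * ((x - Real.cosh t : ℝ):ℂ) ^ (-(1/2 + μ)) := by
      simp only [Fk_xslice' hx]
      rw [MeasureTheory.integral_indicator measurableSet_Ioo, ← MeasureTheory.integral_const_mul]
      exact MeasureTheory.setIntegral_congr_fun measurableSet_Ioo (fun t _ => by ring)
    rw [legendreP, hJ, hint]
    calc ((x ^ 2 - 1 : ℝ) : ℂ) ^ (-μ / 2) * Complex.exp (-(y : ℂ) * x) *
          ((Real.sqrt (2 / Real.pi) : ℂ) * ((Real.sqrt (x ^ 2 - 1) : ℝ) : ℂ) ^ μ /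
              Complex.Gamma (1 / 2 - μ) *
            ∫ t in Set.Ioo 0 (Real.log (x + Real.sqrt (x^2-1))),
              (Real.cos (n * t) : ℂ) * ((x - Real.cosh t : ℝ):ℂ) ^ (-(1/2 + μ)))
        = (((x ^ 2 - 1 : ℝ) : ℂ) ^ (-μ / 2) * ((Real.sqrt (x ^ 2 - 1) : ℝ) : ℂ) ^ μ) *
            (((Real.sqrt (2 / Real.pi) : ℂ) / Complex.Gamma ((1:ℂ)/2 - μ)) *
              (Complex.exp (-(y:ℂ)*x) *
                ∫ t in Set.Ioo 0 (Real.log (x + Real.sqrt (x^2-1))),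
                  (Real.cos (n * t) : ℂ) * ((x - Real.cosh t : ℝ):ℂ) ^ (-(1/2 + μ)))) := by
          ring
      _ = _ := by rw [hAB, one_mul]
  rw [MeasureTheory.setIntegral_congr_fun measurableSet_Ioi hpt,
    MeasureTheory.integral_const_mul,
    MeasureTheory.setIntegral_eq_integral_of_forall_compl_eq_zero (fun x hx => by
      have h0 : ∀ t, Fk μ n y x t = 0 := Fk_zero_of_le (by simpa using hx)
      simp [h0]),
    MeasureTheory.integral_integral_swap (Fk_integrable hμ hy),
    ← MeasureTheory.setIntegral_eq_integral_of_forall_compl_eq_zero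
      (s := Set.Ioi (0:ℝ)) (fun t ht => by
        have h0 : ∀ x, Fk μ n y x t = 0 := Fk_slice_zero' μ n y (by simpa using ht)
        simp [h0]),
    MeasureTheory.setIntegral_congr_fun measurableSet_Ioi
      (fun t ht => Fk_integral_x hμ hy (Set.mem_Ioi.mp ht))]
  have hpull : (∫ t in Set.Ioi (0:ℝ), (Real.cos (n*t) : ℂ) *
        ((Real.exp (-y * Real.cosh t) : ℝ) *
          ((1/(y:ℂ)) ^ ((1:ℂ)/2 - μ) * Complex.Gamma ((1:ℂ)/2 - μ))))
      = ((1/(y:ℂ)) ^ ((1:ℂ)/2 - μ) * Complex.Gamma ((1:ℂ)/2 - μ)) * (besselKim n y : ℂ) := by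
    have h1 : (∫ t in Set.Ioi (0:ℝ), (Real.cos (n*t) : ℂ) *
          ((Real.exp (-y * Real.cosh t) : ℝ) *
            ((1/(y:ℂ)) ^ ((1:ℂ)/2 - μ) * Complex.Gamma ((1:ℂ)/2 - μ))))
        = ∫ t in Set.Ioi (0:ℝ), ((1/(y:ℂ)) ^ ((1:ℂ)/2 - μ) * Complex.Gamma ((1:ℂ)/2 - μ)) *
            ((Real.exp (-y * Real.cosh t) * Real.cos (n * t) : ℝ) : ℂ) :=
      MeasureTheory.setIntegral_congr_fun measurableSet_Ioi (fun t _ => by push_cast; ring)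
    rw [h1, MeasureTheory.integral_const_mul, besselKim]
    congr 1
    exact integral_ofReal
  rw [hpull]
  have harg : Complex.arg (y:ℂ) ≠ Real.pi := by
    rw [Complex.arg_ofReal_of_nonneg hy.le]
    exact Ne.symm Real.pi_ne_zero
  have hy' : (1/(y:ℂ)) ^ ((1:ℂ)/2 - μ) = (y:ℂ) ^ (μ - 1/2) := by
    rw [one_div, Complex.inv_cpow _ _ harg, ← Complex.cpow_neg,
      show -((1:ℂ)/2 - μ) = μ - 1/2 by ring]
  rw [hy']
  calc (Real.sqrt (2 / Real.pi) : ℂ) / Complex.Gamma ((1:ℂ)/2 - μ) *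
        ((y:ℂ) ^ (μ - 1/2) * Complex.Gamma ((1:ℂ)/2 - μ) * (besselKim n y : ℂ))
      = (Complex.Gamma ((1:ℂ)/2 - μ) / Complex.Gamma ((1:ℂ)/2 - μ)) *
          ((Real.sqrt (2 / Real.pi) : ℂ) * (y:ℂ) ^ (μ - 1/2) * (besselKim n y : ℂ)) := by ring
    _ = _ := by rw [div_self hΓ, one_mul]
end
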